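/- arXiv:1109.3102 — 3 statements merged into one kernel-verified Lean document; each statement's English description precedes it below -/
import Mathlib

section
/- Let K ∈ ℕ, M ≥ K, N = 2M+1, and let p: ℝ → ℂ be continuous with support in [−K/2, K/2] such that Φ_p(l/N) > 0 for all l ∈ {0,…,2M}. Let G̃_M = F D F* where F is the unitary N×N DFT matrix and D is the diagonal matrix with entries Φ_p(l/N). For t ∈ ℝ let p^M(t) = (p(t+M), …, p(t−M))ᵀ ∈ ℂ^N. Then for every t with |t| ≤ M − K/2 and every m ∈ {−M,…,M}, the (m+M)-th entry of G̃_M^{−1/2} p^M(t) equals (1/N) ∑_{l=0}^{2M} e^{−2πiml/N} (Zp)(t, l/N) / √(Φ_p(l/N)), where (Zp)(t,ν) = ∑_{n∈ℤ} p(t−n) e^{2πinν} is the Zak transform of p. -/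
open MeasureTheory Complex Filter Topology Matrix
open scoped Real ENNReal FourierTransform

noncomputable section

/-- The 1-periodic symbol `Φ_p(ν) = ∑_{k∈ℤ} |p̂(ν+k)|²` of `p`. -/
def symbolPhi (p : ℝ → ℂ) (ν : ℝ) : ℝ := ∑' k : ℤ, ‖𝓕 p (ν + k)‖ ^ 2

/-- The Zak transform `(Zp)(t,ν) = ∑_{n∈ℤ} p(t−n) e^{2πinν}`. -/
def zak (p : ℝ → ℂ) (t ν : ℝ) : ℂ :=
  ∑' n : ℤ, p (t - n) * Complex.exp (2 * (Real.pi : ℂ) * Complex.I * (n : ℂ) * (ν : ℂ))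

/-- The unitary `N×N` DFT matrix `[F]_{nm} = N^{−1/2} e^{−2πinm/N}`. -/
def dftMatrix (N : ℕ) : Matrix (Fin N) (Fin N) ℂ :=
  Matrix.of fun n m =>
    ((Real.sqrt N)⁻¹ : ℂ) *
      Complex.exp (-2 * (Real.pi : ℂ) * Complex.I * ((n : ℕ) : ℂ) * ((m : ℕ) : ℂ) / (N : ℂ))

/-- `G̃_M^{−1/2} = F D^{−1/2} F*`, where `D` is the diagonal of the samples `Φ_p(l/N)`. -/
def strangInvSqrt (p : ℝ → ℂ) (N : ℕ) : Matrix (Fin N) (Fin N) ℂ :=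
  dftMatrix N *
    Matrix.diagonal (fun l : Fin N =>
      ((Real.sqrt (symbolPhi p (((l : ℕ) : ℝ) / (N : ℝ))))⁻¹ : ℂ)) *
    (dftMatrix N)ᴴ

/-- The vector `p^M(t) = (p(t+M), …, p(t−M))ᵀ ∈ ℂ^N`, `N = 2M+1`. -/
def pVec (p : ℝ → ℂ) (M : ℕ) (t : ℝ) (j : Fin (2 * M + 1)) : ℂ :=
  p (t + (M : ℝ) - ((j : ℕ) : ℝ))

/-- for continuous `p` supported in `[−K/2,K/2]`, `M ≥ K`, `N = 2M+1`, with
`Φ_p(l/N) > 0` for all `l`, and every `t` with `|t| ≤ M − K/2`, the `(m+M)`-th entry of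
`G̃_M^{−1/2} p^M(t)` (here indexed by `i = m+M : Fin N`, so `m = i − M`) equals
`(1/N) ∑_{l=0}^{2M} e^{−2πiml/N} (Zp)(t,l/N)/√(Φ_p(l/N))`. -/
theorem stmt7 (K M : ℕ) (hMK : K ≤ M) (p : ℝ → ℂ) (hc : Continuous p)
    (hsupp : Function.support p ⊆ Set.Icc (-(K : ℝ) / 2) ((K : ℝ) / 2))
    (hΦpos : ∀ l : Fin (2 * M + 1),
      0 < symbolPhi p (((l : ℕ) : ℝ) / ((2 * M + 1 : ℕ) : ℝ))) :
    ∀ i : Fin (2 * M + 1), ∀ t : ℝ, |t| ≤ (M : ℝ) - (K : ℝ) / 2 →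
      (strangInvSqrt p (2 * M + 1)).mulVec (pVec p M t) i
        = (1 / ((2 * M + 1 : ℕ) : ℂ)) *
            ∑ l : Fin (2 * M + 1),
              Complex.exp (-2 * (Real.pi : ℂ) * Complex.I * ((((i : ℕ) : ℤ) - (M : ℤ)) : ℂ)
                  * ((l : ℕ) : ℂ) / ((2 * M + 1 : ℕ) : ℂ)) *
                zak p t (((l : ℕ) : ℝ) / ((2 * M + 1 : ℕ) : ℝ)) /
                  (Real.sqrt (symbolPhi p (((l : ℕ) : ℝ) / ((2 * M + 1 : ℕ) : ℝ))) : ℂ) := by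
  intro i t ht
  have hNpos : (0 : ℝ) < ((2 * M + 1 : ℕ) : ℝ) := by positivity
  have hN0 : ((2 * M + 1 : ℕ) : ℂ) ≠ 0 := by exact_mod_cast hNpos.ne'
  have habs := abs_le.mp ht
  -- terms of the zak tsum vanish outside Icc (-M) M
  have hzero : ∀ n : ℤ, n ∉ Finset.Icc (-(M : ℤ)) (M : ℤ) → p (t - (n : ℝ)) = 0 := by
    intro n hn
    by_contra hp
    have hmem := Set.mem_Icc.mp (hsupp (Function.mem_support.mpr hp))
    rw [Finset.mem_Icc, not_and_or, not_le, not_le] at hn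
    rcases hn with h | h
    · have h' : (n : ℝ) ≤ -(M : ℝ) - 1 := by exact_mod_cast (by omega : n ≤ -(M : ℤ) - 1)
      linarith [hmem.2]
    · have h' : ((M : ℝ)) + 1 ≤ (n : ℝ) := by exact_mod_cast (by omega : (M : ℤ) + 1 ≤ n)
      linarith [hmem.1]
  -- reindexing: Icc (-M) M as image of Fin (2M+1)
  have hIcc : Finset.Icc (-(M : ℤ)) (M : ℤ)
      = Finset.map ⟨fun j : Fin (2 * M + 1) => ((j : ℕ) : ℤ) - (M : ℤ),
          fun a b hab => by
            have hab' : ((a : ℕ) : ℤ) - (M : ℤ) = ((b : ℕ) : ℤ) - (M : ℤ) := hab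
            exact Fin.ext (by omega)⟩ Finset.univ := by
    ext n
    simp only [Finset.mem_Icc, Finset.mem_map, Finset.mem_univ, true_and,
      Function.Embedding.coeFn_mk]
    constructor
    · intro h
      refine ⟨⟨(n + (M : ℤ)).toNat, by omega⟩, ?_⟩
      show (((n + (M : ℤ)).toNat : ℕ) : ℤ) - (M : ℤ) = n
      omega
    · rintro ⟨j, rfl⟩
      have := j.isLt
      show -(M : ℤ) ≤ ((j : ℕ) : ℤ) - (M : ℤ) ∧ ((j : ℕ) : ℤ) - (M : ℤ) ≤ (M : ℤ)
      omega
  -- zak as a finite sum over Fin (2M+1)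
  have hzak : ∀ ν : ℝ, zak p t ν =
      ∑ j : Fin (2 * M + 1), p (t + (M : ℝ) - ((j : ℕ) : ℝ)) *
        Complex.exp (2 * (Real.pi : ℂ) * Complex.I * (((j : ℕ) : ℂ) - (M : ℂ)) * (ν : ℂ)) := by
    intro ν
    rw [zak, tsum_eq_sum (s := Finset.Icc (-(M : ℤ)) (M : ℤ))
      (fun n hn => by rw [hzero n hn, zero_mul]), hIcc, Finset.sum_map]
    refine Finset.sum_congr rfl fun j _ => ?_
    show p (t - ((((j : ℕ) : ℤ) - (M : ℤ) : ℤ) : ℝ)) * Complex.exp (2 * (Real.pi : ℂ) * Complex.I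
      * ((((j : ℕ) : ℤ) - (M : ℤ) : ℤ) : ℂ) * (ν : ℂ)) = _
    have h1 : t - ((((j : ℕ) : ℤ) - (M : ℤ) : ℤ) : ℝ) = t + (M : ℝ) - ((j : ℕ) : ℝ) := by
      push_cast; ring
    have h2 : ((((j : ℕ) : ℤ) - (M : ℤ) : ℤ) : ℂ) = ((j : ℕ) : ℂ) - (M : ℂ) := by
      push_cast; ring
    rw [h1, h2]
  have hsq : (((Real.sqrt ((2 * M + 1 : ℕ) : ℝ)) : ℂ))⁻¹
        * (((Real.sqrt ((2 * M + 1 : ℕ) : ℝ)) : ℂ))⁻¹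
      = (((2 * M + 1 : ℕ) : ℂ))⁻¹ := by
    rw [← mul_inv, ← Complex.ofReal_mul, Real.mul_self_sqrt hNpos.le, Complex.ofReal_natCast]
  -- unfold the lhs entrywise
  have lhs_eq : (strangInvSqrt p (2 * M + 1)).mulVec (pVec p M t) i
      = ∑ l : Fin (2 * M + 1), dftMatrix (2 * M + 1) i l *
          ((Real.sqrt (symbolPhi p (((l : ℕ) : ℝ) / ((2 * M + 1 : ℕ) : ℝ))) : ℂ))⁻¹ *
          ∑ j : Fin (2 * M + 1), star (dftMatrix (2 * M + 1) j l) * pVec p M t j := by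
    have entry : ∀ j, strangInvSqrt p (2 * M + 1) i j
        = ∑ l : Fin (2 * M + 1), dftMatrix (2 * M + 1) i l *
            (((Real.sqrt (symbolPhi p (((l : ℕ) : ℝ) / ((2 * M + 1 : ℕ) : ℝ))) : ℂ))⁻¹ *
              star (dftMatrix (2 * M + 1) j l)) := by
      intro j
      rw [strangInvSqrt, Matrix.mul_assoc, Matrix.mul_apply]
      refine Finset.sum_congr rfl fun l _ => ?_
      congr 1
      simp only [Matrix.diagonal_mul, Matrix.conjTranspose_apply]
    simp only [Matrix.mulVec, dotProduct, entry, Finset.sum_mul]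
    rw [Finset.sum_comm]
    refine Finset.sum_congr rfl fun l _ => ?_
    rw [Finset.mul_sum]
    refine Finset.sum_congr rfl fun j _ => ?_
    ring
  rw [lhs_eq, Finset.mul_sum]
  refine Finset.sum_congr rfl fun l _ => ?_
  -- the inner sum is a scaled zak transform
  have hinner : ∑ j : Fin (2 * M + 1), star (dftMatrix (2 * M + 1) j l) * pVec p M t j
      = (((Real.sqrt ((2 * M + 1 : ℕ) : ℝ)) : ℂ))⁻¹ *
          (Complex.exp (2 * (Real.pi : ℂ) * Complex.I * (M : ℂ) * ((l : ℕ) : ℂ)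
              / ((2 * M + 1 : ℕ) : ℂ)) *
            zak p t (((l : ℕ) : ℝ) / ((2 * M + 1 : ℕ) : ℝ))) := by
    rw [hzak, Finset.mul_sum, Finset.mul_sum]
    refine Finset.sum_congr rfl fun j _ => ?_
    simp only [dftMatrix, Matrix.of_apply, pVec, star_mul', Complex.star_def,
      ← Complex.exp_conj]
    rw [Complex.ofReal_div, Complex.ofReal_natCast, Complex.ofReal_natCast]
    have hconj : (starRingEnd ℂ)
        (-2 * (Real.pi : ℂ) * Complex.I * ((j : ℕ) : ℂ) * ((l : ℕ) : ℂ) / ((2 * M + 1 : ℕ) : ℂ))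
        = 2 * (Real.pi : ℂ) * Complex.I * ((j : ℕ) : ℂ) * ((l : ℕ) : ℂ)
            / ((2 * M + 1 : ℕ) : ℂ) := by
      rw [map_div₀, map_natCast]
      congr 1
      rw [show (-2 * (Real.pi : ℂ) * Complex.I * ((j : ℕ) : ℂ) * ((l : ℕ) : ℂ))
          = (((-2 * Real.pi * (j : ℕ) * (l : ℕ) : ℝ)) : ℂ) * Complex.I by push_cast; ring,
        _root_.map_mul, Complex.conj_I, Complex.conj_ofReal]
      push_cast; ring
    have hstar : (starRingEnd ℂ) ((((Real.sqrt ((2 * M + 1 : ℕ) : ℝ)) : ℂ))⁻¹)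
        = (((Real.sqrt ((2 * M + 1 : ℕ) : ℝ)) : ℂ))⁻¹ := by
      rw [map_inv₀, Complex.conj_ofReal]
    rw [hconj, hstar]
    have harg : 2 * (Real.pi : ℂ) * Complex.I * (M : ℂ) * ((l : ℕ) : ℂ) / ((2 * M + 1 : ℕ) : ℂ)
        + 2 * (Real.pi : ℂ) * Complex.I * (((j : ℕ) : ℂ) - (M : ℂ))
            * (((l : ℕ) : ℂ) / ((2 * M + 1 : ℕ) : ℂ))
        = 2 * (Real.pi : ℂ) * Complex.I * ((j : ℕ) : ℂ) * ((l : ℕ) : ℂ)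
            / ((2 * M + 1 : ℕ) : ℂ) := by
      field_simp
      ring
    rw [← harg, Complex.exp_add]
    ring
  rw [hinner]
  simp only [dftMatrix, Matrix.of_apply]
  have hexp : Complex.exp (-2 * (Real.pi : ℂ) * Complex.I * ((i : ℕ) : ℂ) * ((l : ℕ) : ℂ)
        / ((2 * M + 1 : ℕ) : ℂ))
      * Complex.exp (2 * (Real.pi : ℂ) * Complex.I * (M : ℂ) * ((l : ℕ) : ℂ)
        / ((2 * M + 1 : ℕ) : ℂ))
      = Complex.exp (-2 * (Real.pi : ℂ) * Complex.I * ((((i : ℕ) : ℤ) - (M : ℤ)) : ℂ)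
          * ((l : ℕ) : ℂ) / ((2 * M + 1 : ℕ) : ℂ)) := by
    rw [← Complex.exp_add]
    congr 1
    push_cast
    field_simp
    ring
  have key : ∀ (s n eA eB eC z q : ℂ), s * s = n⁻¹ → eA * eB = eC →
      s * eA * q⁻¹ * (s * (eB * z)) = 1 / n * (eC * z / q) := by
    intro s n eA eB eC z q h1 h2
    rw [← h2, one_div, ← h1, div_eq_mul_inv]
    ring
  exact key _ _ _ _ _ _ _ hsq hexp
end
end

section
/- Let K ∈ ℕ and let p: ℝ → ℂ be continuous with support in [−K/2, K/2] such that Φ_p is continuous and Φ_p(ν) ≥ A > 0 for all ν. Then for every k ∈ ℤ and every t ∈ ℝ, the Riemann-type sums (1/(2M+1)) ∑_{l=0}^{2M} e^{−2πikl/(2M+1)} (Zp)(t, l/(2M+1)) / √(Φ_p(l/(2M+1))) converge as M → ∞ to ∫₀¹ e^{−2πikν} (Zp)(t,ν) / √(Φ_p(ν)) dν = ∫₀¹ (Z p(·−k))(t,ν) / √(Φ_p(ν)) dν; i.e. the ALO pulses p̃°ᴹ_k(t) converge pointwise on compact sets to the limit pulse p̃°_k(t). -/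
open MeasureTheory Complex Filter Topology
open scoped Real ENNReal FourierTransform

noncomputable section

lemma step_eq (f : ℝ → ℂ) (hf : Continuous f) (n : ℕ) (hn : 0 < n) :
    (1 / (n : ℂ)) * ∑ l ∈ Finset.range n, f ((l : ℝ) / (n : ℝ))
      = ∫ ν in (0:ℝ)..1, f ((⌊ν * n⌋ : ℝ) / n) := by
  have hn0 : (n : ℝ) ≠ 0 := Nat.cast_ne_zero.mpr hn.ne'
  have hnpos : (0:ℝ) < n := Nat.cast_pos.mpr hn
  set a : ℕ → ℝ := fun i => (i : ℝ) / n with ha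
  have key : ∀ l, l < n →
      (∀ᵐ x : ℝ, x ∈ Set.uIoc (a l) (a (l+1)) →
        f ((⌊x * n⌋ : ℝ) / n) = f ((l : ℝ) / n)) := by
    intro l _
    have hzero : (volume : Measure ℝ) {((l:ℝ)+1)/n} = 0 := measure_singleton _
    filter_upwards [compl_mem_ae_iff.mpr hzero] with x hx hmem
    have hle : a l ≤ a (l+1) := by
      simp only [ha]
      gcongr
      push_cast; linarith
    rw [Set.uIoc_of_le hle] at hmem
    have h1 : (l : ℝ) / n < x := hmem.1
    have h2 : x ≤ ((l:ℝ)+1) / n := by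
      have h := hmem.2
      simp only [ha] at h; push_cast at h; linarith
    have hxne : x ≠ ((l:ℝ)+1)/n := fun h => hx (by simp [h])
    have h2' : x < ((l:ℝ)+1)/n := lt_of_le_of_ne h2 hxne
    have hfl : ⌊x * n⌋ = (l : ℤ) := by
      rw [Int.floor_eq_iff]
      constructor
      · push_cast
        calc (l:ℝ) = ((l:ℝ)/n) * n := by field_simp
        _ ≤ x * n := by nlinarith
      · push_cast
        calc x * n < (((l:ℝ)+1)/n) * n := by nlinarith
        _ = (l:ℝ)+1 := by field_simp
    rw [hfl]; push_cast; rfl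
  have hint : ∀ l, l < n → IntervalIntegrable (fun x => f ((⌊x * n⌋:ℝ)/n)) volume (a l) (a (l+1)) := by
    intro l hl
    rw [intervalIntegrable_iff]
    have hconst : IntegrableOn (fun _ : ℝ => f ((l:ℝ)/n)) (Set.uIoc (a l) (a (l+1))) volume := by
      apply (integrableOn_const_iff (by finiteness)).mpr; right
      rw [Set.uIoc_of_le (by simp only [ha]; gcongr; push_cast; linarith)]
      exact measure_Ioc_lt_top
    exact hconst.congr ((ae_restrict_iff' measurableSet_uIoc).mpr
      ((key l hl).mono fun x h hx => (h hx).symm))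
  have hsum := intervalIntegral.sum_integral_adjacent_intervals (μ := volume)
    (f := fun x => f ((⌊x * n⌋:ℝ)/n)) (a := a) (n := n) hint
  have ha0 : a 0 = 0 := by simp [ha]
  have han : a n = 1 := by simp only [ha]; exact div_self hn0
  rw [ha0, han] at hsum
  rw [← hsum]
  have heach : ∀ l ∈ Finset.range n,
      (∫ x in a l..a (l+1), f ((⌊x * n⌋:ℝ)/n)) = (1/(n:ℝ)) • f ((l:ℝ)/n) := by
    intro l hl
    rw [intervalIntegral.integral_congr_ae (key l (Finset.mem_range.mp hl)),
      intervalIntegral.integral_const]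
    congr 1
    simp only [ha]; push_cast; field_simp; ring
  rw [Finset.sum_congr rfl heach]
  rw [Finset.mul_sum]
  apply Finset.sum_congr rfl
  intro l _
  rw [Complex.real_smul]
  push_cast
  ring


lemma riemann_tendsto (f : ℝ → ℂ) (hf : Continuous f) :
    Tendsto (fun M : ℕ =>
        (1 / ((2 * M + 1 : ℕ) : ℂ)) *
          ∑ l ∈ Finset.range (2 * M + 1), f ((l : ℝ) / ((2 * M + 1 : ℕ) : ℝ)))
      atTop (nhds (∫ ν in (0:ℝ)..1, f ν)) := by
  have hN : ∀ M : ℕ, (0:ℝ) < ((2 * M + 1 : ℕ) : ℝ) := by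
    intro M; positivity
  have hNnat : Tendsto (fun M : ℕ => 2 * M + 1) atTop atTop :=
    tendsto_atTop_mono (fun M => by simp; omega) tendsto_id
  have hN' : Tendsto (fun M : ℕ => ((2 * M + 1 : ℕ) : ℝ)) atTop atTop := by
    exact tendsto_natCast_atTop_atTop.comp hNnat
  -- dominated convergence for the step functions
  obtain ⟨C, hC⟩ := (isCompact_Icc (a := (0:ℝ)) (b := 1)).exists_bound_of_continuousOn
    hf.continuousOn
  set g : ℕ → ℝ → ℂ := fun M ν => f ((⌊ν * ((2*M+1:ℕ):ℝ)⌋ : ℝ) / ((2*M+1:ℕ):ℝ)) with hg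
  have hmeas : ∀ M, AEStronglyMeasurable (g M) (volume.restrict (Set.Ioc (0:ℝ) 1)) := by
    intro M
    have : Measurable fun ν : ℝ => ((⌊ν * ((2*M+1:ℕ):ℝ)⌋ : ℝ) / ((2*M+1:ℕ):ℝ)) :=
      ((measurable_from_top.comp (Int.measurable_floor.comp
        (measurable_id.mul_const _))).div_const _)
    exact (hf.measurable.comp this).aestronglyMeasurable
  have hbound : ∀ M, ∀ᵐ ν ∂(volume.restrict (Set.Ioc (0:ℝ) 1)), ‖g M ν‖ ≤ C := by
    intro M
    filter_upwards [ae_restrict_mem measurableSet_Ioc] with ν hν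
    apply hC
    constructor
    · apply div_nonneg _ (hN M).le
      have : (0:ℤ) ≤ ⌊ν * ((2*M+1:ℕ):ℝ)⌋ := Int.floor_nonneg.mpr (mul_nonneg hν.1.le (hN M).le)
      exact_mod_cast this
    · rw [div_le_one (hN M)]
      calc ((⌊ν * ((2*M+1:ℕ):ℝ)⌋:ℝ)) ≤ ν * ((2*M+1:ℕ):ℝ) := Int.floor_le _
      _ ≤ 1 * ((2*M+1:ℕ):ℝ) := by nlinarith [hν.2, (hN M)]
      _ = ((2*M+1:ℕ):ℝ) := one_mul _
  have hlim : ∀ᵐ ν ∂(volume.restrict (Set.Ioc (0:ℝ) 1)),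
      Tendsto (fun M => g M ν) atTop (nhds (f ν)) := by
    refine Filter.Eventually.of_forall (fun ν => ?_)
    have harg : Tendsto (fun M : ℕ => (⌊ν * ((2*M+1:ℕ):ℝ)⌋ : ℝ) / ((2*M+1:ℕ):ℝ))
        atTop (nhds ν) := by
      have hup : ∀ M : ℕ, (⌊ν * ((2*M+1:ℕ):ℝ)⌋ : ℝ) / ((2*M+1:ℕ):ℝ) ≤ ν := by
        intro M
        rw [div_le_iff₀ (hN M)]
        exact Int.floor_le _
      have hlo : ∀ M : ℕ, ν - 1 / ((2*M+1:ℕ):ℝ) ≤ (⌊ν * ((2*M+1:ℕ):ℝ)⌋ : ℝ) / ((2*M+1:ℕ):ℝ) := by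
        intro M
        rw [sub_le_iff_le_add, ← add_div, le_div_iff₀ (hN M)]
        have := Int.sub_one_lt_floor (ν * ((2*M+1:ℕ):ℝ))
        linarith
      have hlo' : Tendsto (fun M : ℕ => ν - 1 / ((2*M+1:ℕ):ℝ)) atTop (nhds ν) := by
        have : Tendsto (fun M : ℕ => 1 / ((2*M+1:ℕ):ℝ)) atTop (nhds 0) :=
          tendsto_one_div_atTop_nhds_zero_nat.comp hNnat
        simpa using tendsto_const_nhds.sub this
      exact tendsto_of_tendsto_of_tendsto_of_le_of_le hlo' tendsto_const_nhds hlo hup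
    exact (hf.tendsto ν).comp harg
  have hDCT := tendsto_integral_of_dominated_convergence (μ := volume.restrict (Set.Ioc (0:ℝ) 1))
    (F := g) (f := f) (fun _ => C) hmeas
    (integrable_const C) hbound hlim
  rw [intervalIntegral.integral_of_le (by norm_num : (0:ℝ) ≤ 1)]
  apply hDCT.congr
  intro M
  rw [← intervalIntegral.integral_of_le (by norm_num : (0:ℝ) ≤ 1)]
  exact (step_eq f hf (2*M+1) (by omega)).symm


lemma zak_cont (K : ℕ) (p : ℝ → ℂ) (hc : Continuous p)
    (hsupp : Function.support p ⊆ Set.Icc (-(K : ℝ) / 2) ((K : ℝ) / 2)) (t : ℝ) :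
    Continuous (fun ν => zak p t ν) := by
  set S : Finset ℤ := Finset.Icc ⌈t - (K:ℝ)/2⌉ ⌊t + (K:ℝ)/2⌋ with hS
  have hzero : ∀ n : ℤ, n ∉ S → p (t - n) = 0 := by
    intro n hn
    by_contra hp
    apply hn
    have hmem := hsupp (Function.mem_support.mpr hp)
    rw [Set.mem_Icc] at hmem
    obtain ⟨hm1, hm2⟩ := hmem
    rw [hS, Finset.mem_Icc]
    constructor
    · rw [Int.ceil_le]; push_cast; linarith
    · rw [Int.le_floor]; push_cast; linarith
  have heq : (fun ν => zak p t ν) = fun ν : ℝ => ∑ n ∈ S,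
      p (t - n) * Complex.exp (2 * (Real.pi : ℂ) * Complex.I * (n : ℂ) * (ν : ℂ)) := by
    funext ν
    exact tsum_eq_sum (fun n hn => by rw [hzero n hn, zero_mul])
  rw [heq]
  apply continuous_finset_sum
  intro n _
  exact continuous_const.mul (Complex.continuous_exp.comp
    (continuous_const.mul Complex.continuous_ofReal))

lemma zak_shift (p : ℝ → ℂ) (k : ℤ) (t ν : ℝ) :
    zak (fun s => p (s - (k : ℝ))) t ν
      = Complex.exp (-2 * (Real.pi : ℂ) * Complex.I * (k : ℂ) * (ν : ℂ)) * zak p t ν := by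
  set G : ℤ → ℂ := fun m => Complex.exp (-2 * (Real.pi : ℂ) * Complex.I * (k : ℂ) * (ν : ℂ)) *
    (p (t - m) * Complex.exp (2 * (Real.pi : ℂ) * Complex.I * (m : ℂ) * (ν : ℂ))) with hG
  have h1 : ∀ n : ℤ, (fun s => p (s - (k : ℝ))) (t - n) *
      Complex.exp (2 * (Real.pi : ℂ) * Complex.I * (n : ℂ) * (ν : ℂ)) = G (n + k) := by
    intro n
    have harg : t - ((n + k : ℤ) : ℝ) = t - (n : ℝ) - (k : ℝ) := by push_cast; ring
    show p (t - (n:ℝ) - (k:ℝ)) * Complex.exp (2 * (Real.pi : ℂ) * Complex.I * (n : ℂ) * (ν : ℂ))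
      = G (n + k)
    simp only [hG]
    conv_rhs => rw [mul_left_comm, ← Complex.exp_add]
    rw [harg]
    congr 2
    push_cast
    ring
  calc zak (fun s => p (s - (k : ℝ))) t ν = ∑' n : ℤ, G (n + k) := tsum_congr h1
  _ = ∑' m : ℤ, G m := (Equiv.addRight k).tsum_eq G
  _ = _ := by rw [hG, tsum_mul_left]; rfl

/-- for continuous `p` supported in `[−K/2,K/2]` with continuous symbol
`Φ_p ≥ A > 0`, the Riemann-type sums
`(1/(2M+1)) ∑_{l=0}^{2M} e^{−2πikl/(2M+1)} (Zp)(t,l/(2M+1))/√(Φ_p(l/(2M+1)))`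
converge, as `M → ∞`, to `∫₀¹ e^{−2πikν}(Zp)(t,ν)/√(Φ_p(ν)) dν
= ∫₀¹ (Z p(·−k))(t,ν)/√(Φ_p(ν)) dν`, for every `k ∈ ℤ` and `t ∈ ℝ`. -/
theorem stmt8 (K : ℕ) (p : ℝ → ℂ) (hc : Continuous p)
    (hsupp : Function.support p ⊆ Set.Icc (-(K : ℝ) / 2) ((K : ℝ) / 2))
    (A : ℝ) (hA : 0 < A) (hΦc : Continuous (symbolPhi p))
    (hΦA : ∀ ν : ℝ, A ≤ symbolPhi p ν) :
    ∀ k : ℤ, ∀ t : ℝ,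
      Tendsto (fun M : ℕ =>
          (1 / ((2 * M + 1 : ℕ) : ℂ)) *
            ∑ l ∈ Finset.range (2 * M + 1),
              Complex.exp (-2 * (Real.pi : ℂ) * Complex.I * (k : ℂ) * (l : ℂ)
                  / ((2 * M + 1 : ℕ) : ℂ)) *
                zak p t ((l : ℝ) / ((2 * M + 1 : ℕ) : ℝ)) /
                  (Real.sqrt (symbolPhi p ((l : ℝ) / ((2 * M + 1 : ℕ) : ℝ))) : ℂ))
        atTop
        (nhds (∫ ν in (0 : ℝ)..1,
          Complex.exp (-2 * (Real.pi : ℂ) * Complex.I * (k : ℂ) * (ν : ℂ)) *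
            zak p t ν / (Real.sqrt (symbolPhi p ν) : ℂ))) ∧
      (∫ ν in (0 : ℝ)..1,
          Complex.exp (-2 * (Real.pi : ℂ) * Complex.I * (k : ℂ) * (ν : ℂ)) *
            zak p t ν / (Real.sqrt (symbolPhi p ν) : ℂ))
        = ∫ ν in (0 : ℝ)..1,
            zak (fun s => p (s - (k : ℝ))) t ν / (Real.sqrt (symbolPhi p ν) : ℂ) := by
  intro k t
  set f : ℝ → ℂ := fun ν =>
    Complex.exp (-2 * (Real.pi : ℂ) * Complex.I * (k : ℂ) * (ν : ℂ)) *
      zak p t ν / (Real.sqrt (symbolPhi p ν) : ℂ) with hfdef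
  have hsq : Continuous fun ν : ℝ => ((Real.sqrt (symbolPhi p ν) : ℝ) : ℂ) :=
    Complex.continuous_ofReal.comp (Real.continuous_sqrt.comp hΦc)
  have hne : ∀ ν : ℝ, ((Real.sqrt (symbolPhi p ν) : ℝ) : ℂ) ≠ 0 := by
    intro ν
    rw [Complex.ofReal_ne_zero]
    exact (Real.sqrt_pos.mpr (lt_of_lt_of_le hA (hΦA ν))).ne'
  have hfc : Continuous f := by
    apply Continuous.div _ hsq hne
    exact (Complex.continuous_exp.comp
      (continuous_const.mul Complex.continuous_ofReal)).mul (zak_cont K p hc hsupp t)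
  constructor
  · have h := riemann_tendsto f hfc
    have heq : (fun M : ℕ =>
        (1 / ((2 * M + 1 : ℕ) : ℂ)) *
          ∑ l ∈ Finset.range (2 * M + 1),
            Complex.exp (-2 * (Real.pi : ℂ) * Complex.I * (k : ℂ) * (l : ℂ)
                / ((2 * M + 1 : ℕ) : ℂ)) *
              zak p t ((l : ℝ) / ((2 * M + 1 : ℕ) : ℝ)) /
                (Real.sqrt (symbolPhi p ((l : ℝ) / ((2 * M + 1 : ℕ) : ℝ))) : ℂ))
        = fun M : ℕ => (1 / ((2 * M + 1 : ℕ) : ℂ)) *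
            ∑ l ∈ Finset.range (2 * M + 1), f ((l : ℝ) / ((2 * M + 1 : ℕ) : ℝ)) := by
      funext M
      congr 1
      apply Finset.sum_congr rfl
      intro l _
      simp only [hfdef]
      congr 3
      push_cast
      ring
    rw [heq]
    exact h
  · symm
    apply intervalIntegral.integral_congr
    intro ν _
    simp only
    rw [zak_shift p k t ν]
end
end

section
/- Let q ∈ L²(ℝ), g ∈ ℓ²(ℤ) with 1-periodic Fourier series ĝ(ν) = ∑_n g_n e^{−2πinν}, and let p ∈ L²(ℝ) satisfy p̂(ν) = ĝ(ν)·q̂(ν) (i.e. p = q ∗' g). Suppose the shift parameter Δ > 0 satisfies 1/Δ ∈ ℕ and ĝ(ν) ≠ 0 for almost every ν. Then the Δ-shift orthogonalization of p coincides with that of q: for almost every ν ∈ ℝ, |p̂(ν)|² / ( (1/Δ) ∑_{k∈ℤ} |p̂(ν − k/Δ)|² ) = |q̂(ν)|² / ( (1/Δ) ∑_{k∈ℤ} |q̂(ν − k/Δ)|² ); i.e. |p̂^{Δ,°}|² = |q̂^{Δ,°}|², so perfect Δ-orthogonalization at rate 1/Δ ∈ ℕ cancels the spectral shaping by g. -/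
open MeasureTheory Complex Filter Topology
open scoped Real ENNReal FourierTransform

noncomputable section

/-- let `q ∈ L²(ℝ)`, `g ∈ ℓ²(ℤ)` with 1-periodic Fourier series
`ĝ(ν) = ∑_n g_n e^{−2πinν}`, and `p` with `p̂ = ĝ·q̂` (i.e. `p = q ∗' g`). If the shift
`Δ > 0` satisfies `1/Δ ∈ ℕ` and `ĝ(ν) ≠ 0` a.e., then the `Δ`-shift orthogonalizations of
`p` and `q` have the same power spectrum:
`|p̂(ν)|²/((1/Δ)∑_k |p̂(ν−k/Δ)|²) = |q̂(ν)|²/((1/Δ)∑_k |q̂(ν−k/Δ)|²)` a.e. -/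
theorem stmt17 (q p : ℝ → ℂ)
    (hq : MemLp q 2 (volume : Measure ℝ)) (hp : MemLp p 2 (volume : Measure ℝ))
    (g : ℤ → ℂ) (hg : Memℓp g 2)
    (ghat : ℝ → ℂ)
    (hghat : ∀ᵐ ν : ℝ, HasSum
      (fun n : ℤ => g n * Complex.exp (-2 * (Real.pi : ℂ) * Complex.I * (n : ℂ) * (ν : ℂ)))
      (ghat ν))
    (hper : ∀ ν : ℝ, ghat (ν + 1) = ghat ν)
    (hpF : ∀ᵐ ν : ℝ, 𝓕 p ν = ghat ν * 𝓕 q ν)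
    (hg0 : ∀ᵐ ν : ℝ, ghat ν ≠ 0)
    (Δ : ℝ) (hΔ : 0 < Δ) (hΔinv : ∃ m : ℕ, Δ * (m : ℝ) = 1) :
    ∀ᵐ ν : ℝ,
      ‖𝓕 p ν‖ ^ 2 / ((1 / Δ) * ∑' k : ℤ, ‖𝓕 p (ν - k / Δ)‖ ^ 2)
        = ‖𝓕 q ν‖ ^ 2 / ((1 / Δ) * ∑' k : ℤ, ‖𝓕 q (ν - k / Δ)‖ ^ 2) := by
  obtain ⟨m, hm⟩ := hΔinv
  have hΔne : Δ ≠ 0 := ne_of_gt hΔ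
  have hminv : (m : ℝ) = 1 / Δ := by field_simp at hm ⊢; linarith
  have hP : Function.Periodic ghat 1 := hper
  have hshift : ∀ (k : ℤ) (ν : ℝ), ghat (ν - k / Δ) = ghat ν := by
    intro k ν
    have : (k : ℝ) / Δ = ((k * m : ℤ) : ℝ) * 1 := by
      push_cast
      rw [mul_one, hminv]
      ring
    rw [this, hP.sub_int_mul_eq]
  have hall : ∀ᵐ ν : ℝ, ∀ k : ℤ,
      𝓕 p (ν - k / Δ) = ghat (ν - k / Δ) * 𝓕 q (ν - k / Δ) := by
    rw [MeasureTheory.ae_all_iff]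
    intro k
    exact (measurePreserving_sub_right (volume : Measure ℝ)
      ((k : ℝ) / Δ)).quasiMeasurePreserving.ae hpF
  filter_upwards [hall, hpF, hg0] with ν hν hν0 hgν
  have hsum : (∑' k : ℤ, ‖𝓕 p (ν - k / Δ)‖ ^ 2)
      = ‖ghat ν‖ ^ 2 * ∑' k : ℤ, ‖𝓕 q (ν - k / Δ)‖ ^ 2 := by
    rw [← tsum_mul_left]
    refine tsum_congr fun k => ?_
    rw [hν k, hshift k ν, norm_mul, mul_pow]
  rw [hsum, hν0, norm_mul, mul_pow, mul_left_comm]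
  have hc : ‖ghat ν‖ ^ 2 ≠ 0 := pow_ne_zero _ (norm_ne_zero_iff.mpr hgν)
  rw [mul_div_mul_left _ _ hc]
end
end
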